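/- Let Γ be a countable group acting by isometries on a metric space (Ω, d), let o ∈ Ω, and let δ > 0 be such that M_p := ∑_{γ ∈ Γ} exp(−δ · d(p, γ·o)) is finite for every p ∈ Ω. For p ∈ Ω define the probability measure ν_p on Γ by ν_p({γ}) = exp(−δ·d(p, γ·o)) / M_p. Then for all p, q ∈ Ω with d(p,q) ≤ 1, the total variation distance satisfies ‖ν_p − ν_q‖ := ∑_{γ ∈ Γ} |ν_p({γ}) − ν_q({γ})| ≤ 2δ·e^{2δ}·d(p,q). -/

import Mathlib

lemma aux_exp_sub_one (u : ℝ) : |Real.exp u - 1| ≤ |u| * Real.exp |u| := by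
  rcases le_or_gt 0 u with h | h
  · rw [abs_of_nonneg h, abs_of_nonneg (by linarith [Real.one_le_exp h])]
    have h1 := Real.add_one_le_exp (-u)
    have h2 : Real.exp (-u) * Real.exp u = 1 := by
      rw [← Real.exp_add]; simp
    nlinarith [Real.exp_pos u]
  · rw [abs_of_neg h, abs_of_nonpos (by linarith [Real.exp_lt_one_iff.2 h])]
    have h1 := Real.add_one_le_exp u
    have h2 := Real.one_le_exp (by linarith : (0:ℝ) ≤ -u)
    nlinarith

/-- Lipschitz estimate for normalized exponentially weighted orbit measures: if
`ν_p(γ) = e^{-δ d(p, γ o)} / M_p`, then for `d(p,q) ≤ 1` the total variation distance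
satisfies `‖ν_p - ν_q‖ ≤ 2δ e^{2δ} d(p,q)`. -/
theorem stmt_5 {Ω Γ : Type*} [MetricSpace Ω] [Group Γ] [Countable Γ]
    [MulAction Γ Ω] (hiso : ∀ γ : Γ, Isometry (fun ω : Ω => γ • ω))
    (o : Ω) (δ : ℝ) (hδ : 0 < δ)
    (hsum : ∀ p : Ω, Summable fun γ : Γ => Real.exp (-δ * dist p (γ • o)))
    (p q : Ω) (hpq : dist p q ≤ 1) :
    (∑' γ : Γ,
      |Real.exp (-δ * dist p (γ • o)) / (∑' γ' : Γ, Real.exp (-δ * dist p (γ' • o))) -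
       Real.exp (-δ * dist q (γ • o)) / (∑' γ' : Γ, Real.exp (-δ * dist q (γ' • o)))|)
      ≤ 2 * δ * Real.exp (2 * δ) * dist p q := by
  set f : Γ → ℝ := fun γ => Real.exp (-δ * dist p (γ • o)) with hf
  set g : Γ → ℝ := fun γ => Real.exp (-δ * dist q (γ • o)) with hg
  have hfs : Summable f := hsum p
  have hgs : Summable g := hsum q
  set A := ∑' γ, f γ with hA
  set B := ∑' γ, g γ with hB
  have hApos : 0 < A := Summable.tsum_pos hfs (fun _ => (Real.exp_pos _).le) 1 (Real.exp_pos _)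
  have hBpos : 0 < B := Summable.tsum_pos hgs (fun _ => (Real.exp_pos _).le) 1 (Real.exp_pos _)
  have hd0 : (0:ℝ) ≤ dist p q := dist_nonneg
  set C : ℝ := δ * dist p q * Real.exp δ with hC
  have hC0 : 0 ≤ C := by positivity
  -- pointwise bound
  have key : ∀ γ, |f γ - g γ| ≤ f γ * C := by
    intro γ
    have h1 : |dist p (γ • o) - dist q (γ • o)| ≤ dist p q := abs_dist_sub_le p q (γ • o)
    set u : ℝ := δ * (dist q (γ • o) - dist p (γ • o)) with hu
    have hgfu : g γ = f γ * Real.exp (-u) := by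
      rw [hf, hg, hu, ← Real.exp_add]; ring_nf
    have habsu : |u| ≤ δ * dist p q := by
      rw [hu, abs_mul, abs_of_pos hδ, abs_sub_comm]
      exact mul_le_mul_of_nonneg_left h1 hδ.le
    have hud : |u| ≤ δ := habsu.trans (by nlinarith)
    have hub : |Real.exp (-u) - 1| ≤ |u| * Real.exp |u| := by
      simpa [abs_neg] using aux_exp_sub_one (-u)
    have hfpos : 0 < f γ := Real.exp_pos _
    calc |f γ - g γ| = |f γ * (1 - Real.exp (-u))| := by rw [hgfu]; ring_nf
      _ = f γ * |Real.exp (-u) - 1| := by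
          rw [abs_mul, abs_of_pos hfpos, abs_sub_comm]
      _ ≤ f γ * (|u| * Real.exp |u|) := mul_le_mul_of_nonneg_left hub hfpos.le
      _ ≤ f γ * C := by
          apply mul_le_mul_of_nonneg_left _ hfpos.le
          rw [hC]
          exact mul_le_mul habsu (Real.exp_le_exp.2 hud) (Real.exp_pos _).le (by positivity)
  have hsumdiff : Summable (fun γ => |f γ - g γ|) := (hfs.sub hgs).abs
  have hsum1 : ∑' γ, |f γ - g γ| ≤ C * A := by
    calc ∑' γ, |f γ - g γ| ≤ ∑' γ, f γ * C :=
          Summable.tsum_le_tsum key hsumdiff (hfs.mul_right _)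
      _ = C * A := by rw [tsum_mul_right]; ring
  have hBA : |B - A| ≤ C * A := by
    have h1 : B - A = ∑' γ, (g γ - f γ) := (Summable.tsum_sub hgs hfs).symm
    have h2 : |∑' γ, (g γ - f γ)| ≤ ∑' γ, |g γ - f γ| := by
      simpa [Real.norm_eq_abs] using norm_tsum_le_tsum_norm (f := fun γ => g γ - f γ)
        (by simpa [Real.norm_eq_abs] using (hgs.sub hfs).abs)
    rw [h1]
    refine h2.trans ?_
    calc ∑' γ, |g γ - f γ| = ∑' γ, |f γ - g γ| := by simp [abs_sub_comm]
      _ ≤ C * A := hsum1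
  have main_pt : ∀ γ, |f γ / A - g γ / B| ≤ |f γ - g γ| / A + g γ / B * (|B - A| / A) := by
    intro γ
    have hgpos : 0 < g γ := Real.exp_pos _
    have heq : f γ / A - g γ / B = (f γ - g γ) / A + g γ * (B - A) / (A * B) := by
      field_simp; ring
    rw [heq]
    refine (abs_add_le _ _).trans ?_
    have e1 : |(f γ - g γ) / A| = |f γ - g γ| / A := by
      rw [abs_div, abs_of_pos hApos]
    have e2 : |g γ * (B - A) / (A * B)| = g γ / B * (|B - A| / A) := by
      rw [abs_div, abs_mul, abs_mul, abs_of_pos hgpos, abs_of_pos hApos, abs_of_pos hBpos]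
      rw [div_mul_div_comm, mul_comm B A]
    rw [e1, e2]
  have hLHSs : Summable (fun γ => |f γ / A - g γ / B|) :=
    ((hfs.div_const A).sub (hgs.div_const B)).abs
  have hRHSs : Summable (fun γ => |f γ - g γ| / A + g γ / B * (|B - A| / A)) :=
    (hsumdiff.div_const A).add ((hgs.div_const B).mul_right _)
  calc (∑' γ, |f γ / A - g γ / B|)
      ≤ ∑' γ, (|f γ - g γ| / A + g γ / B * (|B - A| / A)) :=
        Summable.tsum_le_tsum main_pt hLHSs hRHSs
    _ = (∑' γ, |f γ - g γ|) / A + (∑' γ, g γ / B) * (|B - A| / A) := by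
        rw [Summable.tsum_add (hsumdiff.div_const A) ((hgs.div_const B).mul_right _),
          tsum_div_const, tsum_mul_right]
    _ = (∑' γ, |f γ - g γ|) / A + (|B - A| / A) := by
        rw [tsum_div_const, ← hB, div_self hBpos.ne', one_mul]
    _ ≤ (C * A) / A + (C * A) / A := by
        gcongr
    _ = 2 * C := by field_simp; ring
    _ ≤ 2 * δ * Real.exp (2 * δ) * dist p q := by
        rw [hC]
        have : Real.exp δ ≤ Real.exp (2 * δ) := Real.exp_le_exp.2 (by linarith)
        nlinarith [Real.exp_pos δ, Real.exp_pos (2*δ)]
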